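/- Let R be a commutative ring, A an R-module, and (mₙ)_{n≥0} a sequence of R-bilinear maps A × A → A such that m₀ is commutative and the family is associative order by order (equivalently, Σₙ ℏⁿ mₙ is an associative product on A[[ℏ]]). Define p(a, b) := m₁(a, b) − m₁(b, a). Then p is a Poisson bracket for the commutative (associative) product m₀: it is antisymmetric, satisfies the Leibniz rule p(m₀(a, b), c) = m₀(a, p(b, c)) + m₀(p(a, c), b), and satisfies the Jacobi identity p(a, p(b, c)) = p(p(a, b), c) + p(b, p(a, c)), for all a, b, c ∈ A. -/
import Mathlib


/-- STATEMENT 16: If `(mₙ)` is a sequence of `R`-bilinear maps on a module `A` which is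
associative order by order and whose zeroth term `m₀` is commutative, then
`p(a,b) := m₁(a,b) − m₁(b,a)` is a Poisson bracket for the commutative product `m₀`:
it is antisymmetric, satisfies the Leibniz rule and the Jacobi identity. -/
theorem quantization_first_order_is_poisson
    (R : Type*) [CommRing R] (A : Type*) [AddCommGroup A] [Module R A]
    (m : ℕ → A →ₗ[R] A →ₗ[R] A)
    (hcomm : ∀ a b : A, m 0 a b = m 0 b a)
    (hassoc : ∀ (k : ℕ) (a b c : A),
      ∑ i ∈ Finset.range (k + 1), m i (m (k - i) a b) c
        = ∑ i ∈ Finset.range (k + 1), m i a (m (k - i) b c))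
    (p : A → A → A)
    (hp : ∀ a b : A, p a b = m 1 a b - m 1 b a) :
    (∀ a b : A, p a b + p b a = 0) ∧
    (∀ a b c : A, p (m 0 a b) c = m 0 a (p b c) + m 0 (p a c) b) ∧
    (∀ a b c : A, p a (p b c) = p (p a b) c + p b (p a c)) := by
  have hD : ∀ x y z : A, m 0 (m 1 x y) z + m 1 (m 0 x y) z
      = m 0 x (m 1 y z) + m 1 x (m 0 y z) := by
    intro x y z
    have h := hassoc 1 x y z
    simp only [Finset.sum_range_succ, Finset.sum_range_zero, zero_add] at h
    norm_num at h
    linear_combination (norm := abel) h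
  have hE : ∀ x y z : A, m 0 (m 2 x y) z + m 1 (m 1 x y) z + m 2 (m 0 x y) z
      = m 0 x (m 2 y z) + m 1 x (m 1 y z) + m 2 x (m 0 y z) := by
    intro x y z
    have h := hassoc 2 x y z
    simp only [Finset.sum_range_succ, Finset.sum_range_zero, zero_add] at h
    norm_num at h
    linear_combination (norm := abel) h
  refine ⟨?_, ?_, ?_⟩
  · intro a b
    simp only [hp]
    abel
  · intro a b c
    simp only [hp, map_sub, LinearMap.sub_apply]
    have h1 := hD b a c
    have h2 := hD b c a
    have h3 := hD c b a
    simp only [hcomm] at h1 h2 h3 ⊢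
    linear_combination (norm := abel) h1 - h2 + h3
  · intro a b c
    simp only [hp, map_sub, LinearMap.sub_apply]
    have h1 := hE a c b
    have h2 := hE b a c
    have h3 := hE c b a
    have h4 := hE a b c
    have h5 := hE b c a
    have h6 := hE c a b
    simp only [hcomm] at h1 h2 h3 h4 h5 h6 ⊢
    linear_combination (norm := abel) h1 + h2 + h3 - h4 - h5 - h6
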